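/- Let 0 < ε < 1 and κ > 0 satisfy κ < min((1−2ε)/3, 1−4ε). If G is a finite connected multigraph such that the total volume of its strongly κ-isolated vertices is at most ε·vol(G), then every κ²-isolated vertex of G is strongly κ-isolated; in particular the total volume of the κ²-isolated vertices is at most ε·vol(G). -/

import Mathlib

open Finset
open scoped Classical

-- `m x y` is the number of oriented edges (darts) from `x` to `y` in a multigraph;
-- a loop at `x` contributes two darts to `m x x`.

/-- Number of oriented edges from `X` to `Y`. -/
def eG {V : Type*} [DecidableEq V] (m : V → V → ℕ) (X Y : Finset V) : ℕ :=
  ∑ x ∈ X, ∑ y ∈ Y, m x y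

/-- Volume of `X` inside the subgraph induced on `A`. -/
def volOn {V : Type*} [DecidableEq V] (m : V → V → ℕ) (A X : Finset V) : ℕ :=
  eG m X A

/-- The subgraph induced on `X` is connected. -/
def ConnOn {V : Type*} [DecidableEq V] (m : V → V → ℕ) (X : Finset V) : Prop :=
  ∀ x ∈ X, ∀ y ∈ X,
    Relation.ReflTransGen (fun a b => a ∈ X ∧ b ∈ X ∧ 0 < m a b) x y

/-- `X` is a `κ`-bad set of the subgraph induced on `A`. -/
def BadSet {V : Type*} [DecidableEq V] (m : V → V → ℕ) (κ : ℝ) (A X : Finset V) : Prop :=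
  X ⊆ A ∧ X.Nonempty ∧ ConnOn m X ∧
    2 * (volOn m A X : ℝ) ≤ (volOn m A A : ℝ) ∧
    (eG m X (A \ X) : ℝ) < κ * (volOn m A X : ℝ)

/-- `X` is a strong `κ`-bad set of the subgraph induced on `A`. -/
def StrongBadSet {V : Type*} [DecidableEq V] (m : V → V → ℕ) (κ : ℝ) (A X : Finset V) : Prop :=
  BadSet m κ A X ∧ ConnOn m (A \ X)

/-- The set of `κ`-isolated vertices of the whole graph. -/
noncomputable def Isol {V : Type*} [Fintype V] [DecidableEq V] (m : V → V → ℕ) (κ : ℝ) :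
    Finset V :=
  univ.filter (fun v => ∃ X, BadSet m κ univ X ∧ v ∈ X)

/-- The set of strongly `κ`-isolated vertices of the whole graph. -/
noncomputable def IsolStrong {V : Type*} [Fintype V] [DecidableEq V] (m : V → V → ℕ) (κ : ℝ) :
    Finset V :=
  univ.filter (fun v => ∃ X, StrongBadSet m κ univ X ∧ v ∈ X)

/-- The subgraph induced on `A` is a `κ`-expander. -/
def IsExpanderOn {V : Type*} [DecidableEq V] (m : V → V → ℕ) (κ : ℝ) (A : Finset V) : Prop :=
  ∀ X ⊆ A, 2 * (volOn m A X : ℝ) ≤ (volOn m A A : ℝ) →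
    κ * (volOn m A X : ℝ) ≤ (eG m X (A \ X) : ℝ)

section Stmt1Aux

set_option linter.unusedSectionVars false
set_option linter.unusedVariables false

open Relation

variable {V : Type*} [Fintype V] [DecidableEq V]

/-- The relation of being joined by an edge inside `S`. -/
def grel (m : V → V → ℕ) (S : Finset V) (a b : V) : Prop := a ∈ S ∧ b ∈ S ∧ 0 < m a b

variable (m : V → V → ℕ)

lemma eG_comm (hsym : ∀ x y, m x y = m y x) (X Y : Finset V) :
    eG m X Y = eG m Y X := by
  rw [eG, eG, Finset.sum_comm]
  exact Finset.sum_congr rfl fun y _ => Finset.sum_congr rfl fun x _ => hsym x y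

lemma eG_union_left {X Y : Finset V} (h : Disjoint X Y) (Z : Finset V) :
    eG m (X ∪ Y) Z = eG m X Z + eG m Y Z :=
  Finset.sum_union h

lemma eG_union_right {Y Z : Finset V} (h : Disjoint Y Z) (X : Finset V) :
    eG m X (Y ∪ Z) = eG m X Y + eG m X Z := by
  unfold eG
  rw [← Finset.sum_add_distrib]
  exact Finset.sum_congr rfl fun x _ => Finset.sum_union h

lemma eG_mono_left {X X' : Finset V} (h : X ⊆ X') (Y : Finset V) :
    eG m X Y ≤ eG m X' Y :=
  Finset.sum_le_sum_of_subset h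

lemma eG_mono_right {Y Y' : Finset V} (h : Y ⊆ Y') (X : Finset V) :
    eG m X Y ≤ eG m X Y' :=
  Finset.sum_le_sum fun x _ => Finset.sum_le_sum_of_subset h

/-- The connected component of `v` in the subgraph induced on `S`. -/
noncomputable def comp (S : Finset V) (v : V) : Finset V :=
  S.filter fun w => ReflTransGen (grel m S) v w

lemma reach_symm (hsym : ∀ x y, m x y = m y x) {S : Finset V} {a b : V}
    (h : ReflTransGen (grel m S) a b) : ReflTransGen (grel m S) b a :=
  by
    haveI : Std.Symm (grel m S) :=
      ⟨fun x y ⟨hx, hy, hp⟩ => ⟨hy, hx, by rw [hsym y x]; exact hp⟩⟩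
    exact Std.Symm.symm _ _ h

lemma mem_comp {S : Finset V} {v w : V} :
    w ∈ comp m S v ↔ w ∈ S ∧ ReflTransGen (grel m S) v w := Finset.mem_filter

lemma mem_comp_self {S : Finset V} {v : V} (hv : v ∈ S) : v ∈ comp m S v :=
  (mem_comp m).2 ⟨hv, .refl⟩

lemma comp_subset (S : Finset V) (v : V) : comp m S v ⊆ S := Finset.filter_subset _ _

lemma comp_closed {S : Finset V} {v a b : V} (ha : a ∈ comp m S v) (hb : b ∈ S)
    (hab : 0 < m a b) : b ∈ comp m S v := by
  rw [mem_comp] at ha ⊢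
  exact ⟨hb, ha.2.tail ⟨ha.1, hb, hab⟩⟩

lemma comp_eq_of_mem (hsym : ∀ x y, m x y = m y x) {S : Finset V} {v w : V}
    (hw : w ∈ comp m S v) : comp m S w = comp m S v := by
  rw [mem_comp] at hw
  ext z
  rw [mem_comp, mem_comp]
  exact ⟨fun ⟨hz, h⟩ => ⟨hz, hw.2.trans h⟩,
    fun ⟨hz, h⟩ => ⟨hz, (reach_symm m hsym hw.2).trans h⟩⟩

lemma reach_in_comp {S : Finset V} {v x y : V} (hx : x ∈ comp m S v)
    (h : ReflTransGen (grel m S) x y) :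
    ReflTransGen (grel m (comp m S v)) x y := by
  induction h with
  | refl => exact .refl
  | @tail b c hb hstep ih =>
    have hbC : b ∈ comp m S v := (mem_comp m).2 ⟨hstep.1, ((mem_comp m).1 hx).2.trans hb⟩
    have hcC : c ∈ comp m S v := comp_closed m hbC hstep.2.1 hstep.2.2
    exact ih.tail ⟨hbC, hcC, hstep.2.2⟩

lemma reach_mono {X Y : Finset V} (h : X ⊆ Y) {a b : V}
    (hab : ReflTransGen (grel m X) a b) : ReflTransGen (grel m Y) a b :=
  ReflTransGen.mono (fun _ _ ⟨h1, h2, h3⟩ => ⟨h h1, h h2, h3⟩) _ _ hab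

lemma connOn_comp (hsym : ∀ x y, m x y = m y x) (S : Finset V) (v : V) :
    ∀ x ∈ comp m S v, ∀ y ∈ comp m S v, ReflTransGen (grel m (comp m S v)) x y := by
  intro x hx y hy
  exact reach_in_comp m hx
    ((reach_symm m hsym ((mem_comp m).1 hx).2).trans ((mem_comp m).1 hy).2)

lemma exit_lemma (hconn : ∀ x ∈ (univ : Finset V), ∀ y ∈ (univ : Finset V),
      ReflTransGen (grel m univ) x y)
    {X : Finset V} {x₀ : V} (hx₀ : x₀ ∈ X) {p : V} (hp : p ∈ univ \ X) :
    ∃ a ∈ comp m (univ \ X) p, ∃ x ∈ X, 0 < m a x := by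
  set S := univ \ X with hS
  have key : ∀ z, ReflTransGen (grel m univ) p z →
      (∃ a ∈ comp m S p, ∃ x ∈ X, 0 < m a x) ∨ z ∈ comp m S p := by
    intro z hz
    induction hz with
    | refl => exact Or.inr (mem_comp_self m hp)
    | @tail b c hb hstep ih =>
      rcases ih with h | hb'
      · exact Or.inl h
      · by_cases hc : c ∈ X
        · exact Or.inl ⟨b, hb', c, hc, hstep.2.2⟩
        · exact Or.inr (comp_closed m hb' (Finset.mem_sdiff.2 ⟨Finset.mem_univ c, hc⟩)
            hstep.2.2)
  rcases key x₀ (hconn p (Finset.mem_univ p) x₀ (Finset.mem_univ x₀)) with h | hx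
  · exact h
  · exact absurd hx₀ (Finset.mem_sdiff.1 (comp_subset m S p hx)).2

lemma comp_ne_of_not_mem (hsym : ∀ x y, m x y = m y x) {S : Finset V} {u p w : V}
    (hpS : p ∈ S) (hpC : p ∉ comp m S u) (hw : w ∈ comp m S p) : w ∉ comp m S u := by
  intro hwC
  have e1 : comp m S w = comp m S p := comp_eq_of_mem m hsym hw
  have e2 : comp m S w = comp m S u := comp_eq_of_mem m hsym hwC
  have : p ∈ comp m S p := mem_comp_self m hpS
  rw [← e1, e2] at this
  exact hpC this

lemma reach_to_X (hsym : ∀ x y, m x y = m y x)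
    (hconn : ∀ x ∈ (univ : Finset V), ∀ y ∈ (univ : Finset V),
      ReflTransGen (grel m univ) x y)
    {X : Finset V} {x₀ : V} (hx₀ : x₀ ∈ X) {u : V}
    {p : V} (hp : p ∈ univ \ comp m (univ \ X) u) :
    ∃ x ∈ X, ReflTransGen (grel m (univ \ comp m (univ \ X) u)) p x := by
  set S := univ \ X with hS
  set C := comp m S u with hC
  by_cases hpX : p ∈ X
  · exact ⟨p, hpX, .refl⟩
  · have hpS : p ∈ S := Finset.mem_sdiff.2 ⟨Finset.mem_univ p, hpX⟩
    have hpC : p ∉ C := (Finset.mem_sdiff.1 hp).2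
    have hsub : comp m S p ⊆ univ \ C := fun w hw =>
      Finset.mem_sdiff.2 ⟨Finset.mem_univ w, comp_ne_of_not_mem m hsym hpS hpC hw⟩
    obtain ⟨a, ha, x, hx, hax⟩ := exit_lemma m hconn hx₀ hpS
    have hpath : ReflTransGen (grel m (univ \ C)) p a :=
      reach_mono m hsub (connOn_comp m hsym S p p (mem_comp_self m hpS) a ha)
    have hXY : x ∈ univ \ C := Finset.mem_sdiff.2 ⟨Finset.mem_univ x, fun hxC =>
      (Finset.mem_sdiff.1 (comp_subset m S u hxC)).2 hx⟩
    exact ⟨x, hx, hpath.tail ⟨hsub ha, hXY, hax⟩⟩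

lemma connOn_compl_comp (hsym : ∀ x y, m x y = m y x)
    (hconn : ∀ x ∈ (univ : Finset V), ∀ y ∈ (univ : Finset V),
      ReflTransGen (grel m univ) x y)
    {X : Finset V} {x₀ : V} (hx₀ : x₀ ∈ X)
    (hXconn : ∀ x ∈ X, ∀ y ∈ X, ReflTransGen (grel m X) x y) (u : V) :
    ∀ p ∈ univ \ comp m (univ \ X) u, ∀ q ∈ univ \ comp m (univ \ X) u,
      ReflTransGen (grel m (univ \ comp m (univ \ X) u)) p q := by
  set S := univ \ X with hS
  set C := comp m S u with hC
  have hXY : X ⊆ univ \ C := fun x hx => Finset.mem_sdiff.2 ⟨Finset.mem_univ x, fun hxC =>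
    (Finset.mem_sdiff.1 (comp_subset m S u hxC)).2 hx⟩
  intro p hp q hq
  obtain ⟨xp, hxp, hpath⟩ := reach_to_X m hsym hconn hx₀ hp
  obtain ⟨xq, hxq, hqath⟩ := reach_to_X m hsym hconn hx₀ hq
  have hmid : ReflTransGen (grel m (univ \ C)) xp xq :=
    reach_mono m hXY (hXconn xp hxp xq hxq)
  exact (hpath.trans hmid).trans (reach_symm m hsym hqath)

lemma eG_comp_zero {S W : Finset V} {u : V} (hW : W ⊆ S)
    (hd : ∀ w ∈ W, w ∉ comp m S u) : eG m (comp m S u) W = 0 :=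
  Finset.sum_eq_zero fun a ha => Finset.sum_eq_zero fun b hb => by
    by_contra h
    exact hd b hb (comp_closed m ha (hW hb) (Nat.pos_of_ne_zero h))

lemma count_lemma (hsym : ∀ x y, m x y = m y x) {κ : ℝ} (hκ0 : 0 < κ) {S X : Finset V}
    (W : Finset V) (hWS : W ⊆ S) (hclosed : ∀ a ∈ W, comp m S a ⊆ W)
    (hbad : ∀ a ∈ W, κ * (eG m (comp m S a) univ : ℝ) ≤ (eG m (comp m S a) X : ℝ)) :
    κ * (eG m W univ : ℝ) ≤ (eG m W X : ℝ) := by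
  induction W using Finset.strongInduction with
  | _ W ih =>
    rcases W.eq_empty_or_nonempty with rfl | ⟨a, ha⟩
    · simp [eG]
    · have haS := hWS ha
      have hCW : comp m S a ⊆ W := hclosed a ha
      have haC : a ∈ comp m S a := mem_comp_self m haS
      have hCne : (comp m S a).Nonempty := ⟨a, haC⟩
      have hsplit : comp m S a ∪ (W \ comp m S a) = W := Finset.union_sdiff_of_subset hCW
      have hdis : Disjoint (comp m S a) (W \ comp m S a) := Finset.disjoint_sdiff
      have hssub : W \ comp m S a ⊂ W := Finset.sdiff_ssubset hCW hCne
      have hWsub : W \ comp m S a ⊆ S := (Finset.sdiff_subset).trans hWS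
      have hclosed' : ∀ b ∈ W \ comp m S a, comp m S b ⊆ W \ comp m S a := by
        intro b hb w hw
        have hbW := Finset.mem_sdiff.1 hb
        refine Finset.mem_sdiff.2 ⟨hclosed b hbW.1 hw, ?_⟩
        exact comp_ne_of_not_mem m hsym (hWS hbW.1) hbW.2 hw
      have ih' := ih _ hssub hWsub hclosed'
        (fun b hb => hbad b (Finset.mem_sdiff.1 hb).1)
      have e1 : eG m W univ = eG m (comp m S a) univ + eG m (W \ comp m S a) univ := by
        conv_lhs => rw [← hsplit]
        exact eG_union_left m hdis univ
      have e2 : eG m W X = eG m (comp m S a) X + eG m (W \ comp m S a) X := by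
        conv_lhs => rw [← hsplit]
        exact eG_union_left m hdis X
      have hb := hbad a ha
      rw [e1, e2]
      push_cast
      linarith

lemma key_lemma (hsym : ∀ x y, m x y = m y x)
    (hconn : ConnOn m Finset.univ)
    (ε κ : ℝ) (hε0 : 0 < ε) (hε1 : ε < 1) (hκ0 : 0 < κ)
    (hκ : κ < min ((1 - 2 * ε) / 3) (1 - 4 * ε))
    (hiso : (volOn m Finset.univ (IsolStrong m κ) : ℝ) ≤
      ε * (volOn m Finset.univ Finset.univ : ℝ))
    {X : Finset V} (hX : BadSet m (κ ^ 2) univ X) :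
    ∃ Y, StrongBadSet m κ univ Y ∧ X ⊆ Y := by
  obtain ⟨-, hXne, hXconn, hXhalf, hXe⟩ := hX
  simp only [volOn] at hXhalf hXe hiso
  have hconn' : ∀ x ∈ (univ : Finset V), ∀ y ∈ (univ : Finset V),
      ReflTransGen (grel m univ) x y := hconn
  have hXconn' : ∀ x ∈ X, ∀ y ∈ X, ReflTransGen (grel m X) x y := hXconn
  obtain ⟨x₀, hx₀⟩ := hXne
  set S := univ \ X with hS
  have hκ1 : κ < 1 := by
    have := hκ.trans_le (min_le_right _ _); linarith
  have hκ3 : κ < (1 - 2 * ε) / 3 := hκ.trans_le (min_le_left _ _)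
  have hε2 : ε < 1 / 2 := by linarith
  have hvolX : (0 : ℝ) < (eG m X univ : ℝ) := by
    have h0 : (0 : ℝ) ≤ (eG m X (univ \ X) : ℝ) := Nat.cast_nonneg _
    nlinarith [sq_nonneg κ, h0, hXe]
  have hXY' : ∀ u : V, X ⊆ univ \ comp m S u := fun u x hx =>
    Finset.mem_sdiff.2 ⟨Finset.mem_univ x, fun hxC =>
      (Finset.mem_sdiff.1 (comp_subset m S u hxC)).2 hx⟩
  have hdecomp : ∀ u : V, univ \ comp m S u = X ∪ (S \ comp m S u) := by
    intro u
    ext z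
    by_cases hz : z ∈ comp m S u
    · have := (Finset.mem_sdiff.1 (comp_subset m S u hz)).2
      simp [hS, Finset.mem_sdiff, hz, this]
    · simp [hS, Finset.mem_sdiff, hz]
      tauto
  have hdXS : Disjoint X S := Finset.disjoint_sdiff
  have hXSe : (eG m X S : ℝ) < κ ^ 2 * (eG m X univ : ℝ) := hXe
  by_cases hbig : ∃ u ∈ S, (eG m univ univ : ℝ) ≤ 2 * (eG m (comp m S u) univ : ℝ)
  · -- some component of the complement is large: its complement is a strong bad set
    obtain ⟨u, huS, hbigu⟩ := hbig
    set C := comp m S u with hC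
    have hcompl : univ \ (univ \ C) = C := by
      rw [Finset.sdiff_sdiff_self_left, Finset.univ_inter]
    have hpart : eG m (univ \ C) univ + eG m C univ = eG m univ univ := by
      rw [← eG_union_left m Finset.sdiff_disjoint univ,
        Finset.sdiff_union_of_subset (Finset.subset_univ C)]
    have hpartR : (eG m (univ \ C) univ : ℝ) + (eG m C univ : ℝ) = (eG m univ univ : ℝ) := by
      exact_mod_cast congrArg (fun n : ℕ => (n : ℝ)) hpart
    have hdisjXSC : Disjoint X (S \ C) := hdXS.mono_right Finset.sdiff_subset
    have hzero : eG m (S \ C) C = 0 := by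
      rw [eG_comm m hsym]
      exact eG_comp_zero m Finset.sdiff_subset (fun w hw => (Finset.mem_sdiff.1 hw).2)
    have heYC : eG m (univ \ C) C = eG m X C + eG m (S \ C) C := by
      conv_lhs => rw [hdecomp u]
      exact eG_union_left m hdisjXSC C
    have hXC : eG m X C ≤ eG m X S := eG_mono_right m (comp_subset m S u) X
    have hvmono : eG m X univ ≤ eG m (univ \ C) univ := eG_mono_left m (hXY' u) univ
    refine ⟨univ \ C, ⟨⟨Finset.subset_univ _, ⟨x₀, hXY' u hx₀⟩, ?_, ?_, ?_⟩, ?_⟩, hXY' u⟩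
    · exact connOn_compl_comp m hsym hconn' hx₀ hXconn' u
    · simp only [volOn]
      linarith
    · simp only [volOn]
      rw [hcompl, heYC, hzero]
      push_cast
      have h1 : (eG m X C : ℝ) ≤ (eG m X S : ℝ) := by exact_mod_cast hXC
      have h2 : (eG m X univ : ℝ) ≤ (eG m (univ \ C) univ : ℝ) := by exact_mod_cast hvmono
      nlinarith
    · rw [hcompl]
      exact connOn_comp m hsym S u
  · -- all components are small: contradiction with the volume of IsolStrong
    exfalso
    push_neg at hbig
    set T := S.filter (fun w =>
      (eG m (comp m S w) X : ℝ) < κ * (eG m (comp m S w) univ : ℝ)) with hT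
    set B := S \ T with hB
    have hTiso : T ⊆ IsolStrong m κ := by
      intro w hw
      obtain ⟨hwS, hwgood⟩ := Finset.mem_filter.1 hw
      have hzero : eG m (comp m S w) (S \ comp m S w) = 0 :=
        eG_comp_zero m Finset.sdiff_subset (fun z hz => (Finset.mem_sdiff.1 hz).2)
      have hdisjXSC : Disjoint X (S \ comp m S w) := hdXS.mono_right Finset.sdiff_subset
      have heC : eG m (comp m S w) (univ \ comp m S w)
          = eG m (comp m S w) X + eG m (comp m S w) (S \ comp m S w) := by
        conv_lhs => rw [hdecomp w]
        exact eG_union_right m hdisjXSC _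
      refine Finset.mem_filter.2 ⟨Finset.mem_univ w, comp m S w,
        ⟨⟨Finset.subset_univ _, ⟨w, mem_comp_self m hwS⟩, connOn_comp m hsym S w, ?_, ?_⟩,
          connOn_compl_comp m hsym hconn' hx₀ hXconn' w⟩, mem_comp_self m hwS⟩
      · simp only [volOn]
        linarith [hbig w hwS]
      · simp only [volOn]
        rw [heC, hzero]
        push_cast
        linarith
    have hBS : B ⊆ S := Finset.sdiff_subset
    have hclosedB : ∀ a ∈ B, comp m S a ⊆ B := by
      intro a ha w hw
      have haB := Finset.mem_sdiff.1 ha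
      have hwS : w ∈ S := comp_subset m S a hw
      refine Finset.mem_sdiff.2 ⟨hwS, fun hwT => ?_⟩
      have hgood := (Finset.mem_filter.1 hwT).2
      rw [comp_eq_of_mem m hsym hw] at hgood
      exact haB.2 (Finset.mem_filter.2 ⟨haB.1, hgood⟩)
    have hbadB : ∀ a ∈ B, κ * (eG m (comp m S a) univ : ℝ) ≤ (eG m (comp m S a) X : ℝ) := by
      intro a ha
      have haB := Finset.mem_sdiff.1 ha
      have : ¬ ((eG m (comp m S a) X : ℝ) < κ * (eG m (comp m S a) univ : ℝ)) :=
        fun h => haB.2 (Finset.mem_filter.2 ⟨haB.1, h⟩)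
      linarith [not_lt.1 this]
    have hcount : κ * (eG m B univ : ℝ) ≤ (eG m B X : ℝ) :=
      count_lemma m hsym hκ0 B hBS hclosedB hbadB
    have hBX : (eG m B X : ℝ) ≤ (eG m S X : ℝ) := by
      exact_mod_cast eG_mono_left m hBS X
    have hSX : (eG m S X : ℝ) = (eG m X S : ℝ) := by
      exact_mod_cast congrArg (fun n : ℕ => (n : ℝ)) (eG_comm m hsym S X)
    have hpart1 : eG m X univ + eG m S univ = eG m univ univ := by
      rw [← eG_union_left m hdXS univ, Finset.union_sdiff_of_subset (Finset.subset_univ X)]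
    have hpart2 : eG m T univ + eG m B univ = eG m S univ := by
      rw [← eG_union_left m Finset.disjoint_sdiff univ,
        Finset.union_sdiff_of_subset (Finset.filter_subset _ _)]
    have hTvol : (eG m T univ : ℝ) ≤ (eG m (IsolStrong m κ) univ : ℝ) := by
      exact_mod_cast eG_mono_left m hTiso univ
    have hp1R : (eG m X univ : ℝ) + (eG m S univ : ℝ) = (eG m univ univ : ℝ) := by
      exact_mod_cast congrArg (fun n : ℕ => (n : ℝ)) hpart1
    have hp2R : (eG m T univ : ℝ) + (eG m B univ : ℝ) = (eG m S univ : ℝ) := by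
      exact_mod_cast congrArg (fun n : ℕ => (n : ℝ)) hpart2
    set g : ℝ := (eG m univ univ : ℝ)
    set x : ℝ := (eG m X univ : ℝ)
    set t : ℝ := (eG m T univ : ℝ)
    set b : ℝ := (eG m B univ : ℝ)
    have hbx : b < κ * x := by
      have h1 : κ * b < κ * (κ * x) := by nlinarith
      exact lt_of_mul_lt_mul_left h1 hκ0.le
    have ht : t ≤ ε * g := le_trans hTvol hiso
    have h2x : 2 * x ≤ g := hXhalf
    have hg0 : 0 < g := by linarith
    have h1 : (1 - ε) * g < (1 + κ) * x := by linarith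
    nlinarith [mul_pos hε0 hg0, mul_pos hκ0 hg0]

end Stmt1Aux

/-- if `0 < ε < 1`, `κ > 0`, `κ < min((1-2ε)/3, 1-4ε)` and the strongly
`κ`-isolated vertices of the connected multigraph `G` have volume at most `ε·vol(G)`,
then every `κ²`-isolated vertex is strongly `κ`-isolated, and in particular the
`κ²`-isolated vertices have volume at most `ε·vol(G)`. -/
theorem stmt1 {V : Type*} [Fintype V] [DecidableEq V]
    (m : V → V → ℕ) (hsym : ∀ x y, m x y = m y x)
    (hconn : ConnOn m Finset.univ)
    (ε κ : ℝ) (hε0 : 0 < ε) (hε1 : ε < 1) (hκ0 : 0 < κ)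
    (hκ : κ < min ((1 - 2 * ε) / 3) (1 - 4 * ε))
    (hiso : (volOn m Finset.univ (IsolStrong m κ) : ℝ) ≤
      ε * (volOn m Finset.univ Finset.univ : ℝ)) :
    Isol m (κ ^ 2) ⊆ IsolStrong m κ ∧
      (volOn m Finset.univ (Isol m (κ ^ 2)) : ℝ) ≤
        ε * (volOn m Finset.univ Finset.univ : ℝ) := by
  have hsub : Isol m (κ ^ 2) ⊆ IsolStrong m κ := by
    intro v hv
    obtain ⟨-, X, hX, hvX⟩ := Finset.mem_filter.1 hv
    obtain ⟨Y, hY, hXY⟩ := key_lemma m hsym hconn ε κ hε0 hε1 hκ0 hκ hiso hX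
    exact Finset.mem_filter.2 ⟨Finset.mem_univ v, Y, hY, hXY hvX⟩
  refine ⟨hsub, le_trans ?_ hiso⟩
  simp only [volOn]
  exact_mod_cast eG_mono_left m hsub univ
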